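/- arXiv:1803.02792 — 2 statements merged into one kernel-verified Lean document; each statement's English description precedes it below -/
import Mathlib

section
/- For any integers x_1 < x_2 < ⋯ < x_n, the product ∏_{1 ≤ i < j ≤ n} (x_j − x_i)/(j − i) is a positive integer. -/
open Finset

lemma clp_pair_prod {n : ℕ} {M : Type*} [CommMonoid M] (f : Fin n → Fin n → M) :
    (∏ p ∈ Finset.univ.filter (fun p : Fin n × Fin n => p.1 < p.2), f p.1 p.2)
      = ∏ i : Fin n, ∏ j ∈ Finset.Ioi i, f i j := by
  rw [Finset.prod_sigma']
  refine (Finset.prod_bij (fun p _ => (p.1, p.2)) ?_ ?_ ?_ ?_).symm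
  · rintro ⟨i, j⟩ h
    simp only [Finset.mem_sigma, Finset.mem_Ioi] at h
    simp [h.2]
  · rintro ⟨i, j⟩ hi ⟨i', j'⟩ hj h
    simpa [Prod.ext_iff, Sigma.ext_iff] using h
  · rintro ⟨i, j⟩ h
    simp only [Finset.mem_filter, Finset.mem_univ, true_and] at h
    exact ⟨⟨i, j⟩, by simp [h], rfl⟩
  · rintro ⟨i, j⟩ h; rfl

/-- Cohn–Larsen–Propp integrality: for any strictly increasing integers
`x 0 < x 1 < ⋯ < x (n-1)`, the product `∏_{i<j} (x j − x i)/(j − i)`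
is a positive integer. -/
theorem clp_product_pos_integer (n : ℕ) (x : Fin n → ℤ) (hx : StrictMono x) :
    ∃ m : ℕ, 0 < m ∧
      (∏ p ∈ Finset.univ.filter (fun p : Fin n × Fin n => p.1 < p.2),
        ((x p.2 - x p.1 : ℤ) : ℚ) / (((p.2 : ℕ) : ℚ) - ((p.1 : ℕ) : ℚ))) = m := by
  obtain _ | k := n
  · exact ⟨1, one_pos, by simp⟩
  set N : ℤ := (Matrix.vandermonde x).det with hN
  have hdvd : (Nat.superFactorial k : ℤ) ∣ N := Matrix.superFactorial_dvd_vandermonde_det x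
  obtain ⟨c, hc⟩ := hdvd
  have hNval : N = ∏ i : Fin (k+1), ∏ j ∈ Finset.Ioi i, (x j - x i) :=
    Matrix.det_vandermonde x
  have hNpos : 0 < N := by
    rw [hNval]
    refine Finset.prod_pos fun i _ => Finset.prod_pos fun j hj => ?_
    exact sub_pos.mpr (hx (Finset.mem_Ioi.mp hj))
  have hsfpos : (0 : ℤ) < (Nat.superFactorial k : ℤ) := by
    have : 0 < Nat.superFactorial k := by
      rw [← Nat.prod_range_factorial_succ]
      exact Finset.prod_pos fun i _ => Nat.factorial_pos _
    exact_mod_cast this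
  have hcpos : 0 < c := by
    by_contra h
    push_neg at h
    have : N ≤ 0 := hc ▸ mul_nonpos_of_nonneg_of_nonpos hsfpos.le h
    omega
  refine ⟨c.toNat, by omega, ?_⟩
  rw [clp_pair_prod (fun i j : Fin (k+1) =>
    ((x j - x i : ℤ) : ℚ) / (((j : ℕ) : ℚ) - ((i : ℕ) : ℚ)))]
  have hnum : (∏ i : Fin (k+1), ∏ j ∈ Finset.Ioi i, ((x j - x i : ℤ) : ℚ)) = (N : ℚ) := by
    rw [hNval]; push_cast; rfl
  have hden : (∏ i : Fin (k+1), ∏ j ∈ Finset.Ioi i, (((j : ℕ) : ℚ) - ((i : ℕ) : ℚ)))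
      = (Nat.superFactorial k : ℚ) := by
    rw [← Matrix.det_vandermonde_id_eq_superFactorial k (R := ℚ),
      Matrix.det_vandermonde (fun i : Fin (k+1) => ((i : ℕ) : ℚ))]
  have hdenne : (∏ i : Fin (k+1), ∏ j ∈ Finset.Ioi i, (((j : ℕ) : ℚ) - ((i : ℕ) : ℚ))) ≠ 0 := by
    rw [hden]
    have : 0 < Nat.superFactorial k := by
      rw [← Nat.prod_range_factorial_succ]
      exact Finset.prod_pos fun i _ => Nat.factorial_pos _
    exact_mod_cast this.ne'
  simp only [Finset.prod_div_distrib]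
  rw [hnum, hden, hc]
  push_cast
  rw [mul_comm, mul_div_assoc, div_self (by exact_mod_cast hsfpos.ne'), mul_one]
  exact_mod_cast (Int.toNat_of_nonneg hcpos.le).symm
end

section
/- For fixed sequences of nonnegative integers a = (a_1,…,a_m), c = (c_1,…,c_k), b = (b_1,…,b_n) with ∑a_i = ∑b_j, and fixed positive reals x, z, the ratio M(R_{⌊xN⌋,0,⌊zN⌋}(a; c; b)) / M(R_{⌊xN⌋,0,⌊zN⌋}(e_a,o_a; e_c,o_c; e_b,o_b)) converges as N → ∞ to s(a_1,…,a_{m−1})·s(a_2,…,a_m)·s(b_1,…,b_{n−1})·s(b_2,…,b_n)·s(c_1,…,c_{k−1})·s(c_2,…,c_k), where each M is expressed (via Theorems 2.3–2.4) as a product of two Cohn–Larsen–Propp determinant-type products Δ over position sets, and s is the dented-semihexagon tiling count. -/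
open Filter Topology

/-- The hyperfactorial `H(n) = 0!·1!⋯(n−1)!`. -/
def hyperfac (n : ℕ) : ℕ := ∏ k ∈ Finset.range n, Nat.factorial k

/-- `τ a j = a_1 + ⋯ + a_j`, the `j`-th partial sum of a 1-based sequence. -/
def tau (a : ℕ → ℕ) (j : ℕ) : ℕ := ∑ r ∈ Finset.Icc 1 j, a r

/-- The Cohn–Larsen–Propp count of lozenge tilings of a semihexagon with
dents at the positions of a finite set `S` of integers:
`Δ(S) / ∏_{1≤i<j≤n}(j−i) = (∏_{p<q ∈ S}(q−p)) / H(|S|)`. -/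
def Tcount (S : Finset ℤ) : ℚ :=
  (∏ p ∈ S, ∏ q ∈ S.filter (fun q => p < q), ((q : ℚ) - (p : ℚ))) /
    (hyperfac S.card : ℚ)

/-- The dent positions contributed by the even-indexed blocks of a fern with
side-lengths `a_1, a_2, …` (half-length `l`), translated by `o`:
`⋃_{i=1}^{l} [o + τ_{2i−1} + 1, o + τ_{2i}]`. -/
noncomputable def blocksEven (l : ℕ) (a : ℕ → ℕ) (o : ℤ) : Finset ℤ :=
  (Finset.range l).biUnion fun i =>
    Finset.Icc (o + (tau a (2 * i + 1) : ℤ) + 1) (o + (tau a (2 * i + 2) : ℤ))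

/-- The dent positions contributed by the odd-indexed blocks:
`⋃_{i=0}^{l−1} [o + τ_{2i} + 1, o + τ_{2i+1}]`. -/
noncomputable def blocksOdd (l : ℕ) (a : ℕ → ℕ) (o : ℤ) : Finset ℤ :=
  (Finset.range l).biUnion fun i =>
    Finset.Icc (o + (tau a (2 * i) : ℤ) + 1) (o + (tau a (2 * i + 1) : ℤ))

/-- The number of lozenge tilings of the hexagon `R_{X,0,Z}(a; c; b)` with
three collinear ferns removed (ferns of even lengths `2la, 2lc, 2lb`), as
given by the factorization of Theorems 2.3–2.4 at `y = 0`: the product of the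
Cohn–Larsen–Propp counts of the upper and lower dented semihexagons, whose
dent position sets are `A ∪ C ∪ B` with the left fern at offset `0`, the
middle fern at offset `a + ⌊(X+Z)/2⌋` and the right fern at offset
`a + c + X + Z`. -/
noncomputable def Mreg (X Z la lc lb : ℕ) (a c b : ℕ → ℕ) : ℚ :=
  let A : ℤ := (∑ i ∈ Finset.Icc 1 (2 * la), a i : ℕ)
  let Cs : ℤ := (∑ i ∈ Finset.Icc 1 (2 * lc), c i : ℕ)
  let oC : ℤ := A + ((X + Z) / 2 : ℕ)
  let oB : ℤ := A + Cs + X + Z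
  Tcount (blocksEven la a 0 ∪ blocksEven lc c oC ∪ blocksEven lb b oB) *
    Tcount (blocksOdd la a 0 ∪ blocksOdd lc c oC ∪ blocksOdd lb b oB)

/-- The two-term sequence `(u, v)` (1-based). -/
def seq2 (u v : ℕ) : ℕ → ℕ := fun i => if i = 1 then u else v

/-- `∑_{i even} a_i` for a fern of half-length `l`. -/
def evenSum (l : ℕ) (a : ℕ → ℕ) : ℕ := ∑ i ∈ Finset.range l, a (2 * i + 2)

/-- `∑_{i odd} a_i` for a fern of half-length `l`. -/
def oddSum (l : ℕ) (a : ℕ → ℕ) : ℕ := ∑ i ∈ Finset.range l, a (2 * i + 1)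

/-! ### Auxiliary definitions and lemmas -/

section Aux

def Pfun (S : Finset ℤ) : ℚ :=
  ∏ p ∈ S, ∏ q ∈ S.filter (fun q => p < q), ((q : ℚ) - (p : ℚ))

def crossP (S T : Finset ℤ) : ℚ := ∏ p ∈ S, ∏ q ∈ T, ((q : ℚ) - (p : ℚ))

def crossR (S T : Finset ℤ) (t : ℤ) : ℝ := ∏ p ∈ S, ∏ q ∈ T, ((t : ℝ) + q - p)

lemma Tcount_eq (S : Finset ℤ) : Tcount S = Pfun S / (hyperfac S.card : ℚ) := rfl

lemma hyperfac_pos (n : ℕ) : 0 < hyperfac n :=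
  Finset.prod_pos fun k _ => Nat.factorial_pos k

lemma Pfun_pos (S : Finset ℤ) : 0 < Pfun S := by
  apply Finset.prod_pos
  intro p hp
  apply Finset.prod_pos
  intro q hq
  simp only [Finset.mem_filter] at hq
  have : (p:ℚ) < q := by exact_mod_cast hq.2
  linarith

lemma crossP_pos {S T : Finset ℤ} (h : ∀ p ∈ S, ∀ q ∈ T, p < q) : 0 < crossP S T := by
  apply Finset.prod_pos
  intro p hp
  apply Finset.prod_pos
  intro q hq
  have : (p:ℚ) < q := by exact_mod_cast h p hp q hq
  linarith

lemma sep_disjoint {S T : Finset ℤ} (h : ∀ p ∈ S, ∀ q ∈ T, p < q) : Disjoint S T := by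
  rw [Finset.disjoint_left]
  intro x hS hT
  exact absurd (h x hS x hT) (lt_irrefl x)

lemma Pfun_union {S T : Finset ℤ} (h : ∀ p ∈ S, ∀ q ∈ T, p < q) :
    Pfun (S ∪ T) = Pfun S * Pfun T * crossP S T := by
  have hd : Disjoint S T := sep_disjoint h
  unfold Pfun crossP
  rw [Finset.prod_union hd]
  have h1 : ∀ p ∈ S, ((S ∪ T).filter (fun q => p < q)) =
      (S.filter (fun q => p < q)) ∪ T := by
    intro p hp
    rw [Finset.filter_union]
    congr 1
    apply Finset.filter_true_of_mem
    intro q hq; exact h p hp q hq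
  have h2 : ∀ p ∈ T, ((S ∪ T).filter (fun q => p < q)) = T.filter (fun q => p < q) := by
    intro p hp
    rw [Finset.filter_union]
    have : S.filter (fun q => p < q) = ∅ := by
      apply Finset.filter_false_of_mem
      intro q hq
      exact not_lt.2 (le_of_lt (h q hq p hp))
    rw [this, Finset.empty_union]
  calc (∏ p ∈ S, ∏ q ∈ (S ∪ T).filter (fun q => p < q), ((q:ℚ) - p)) *
        ∏ p ∈ T, ∏ q ∈ (S ∪ T).filter (fun q => p < q), ((q:ℚ) - p)
      = (∏ p ∈ S, ((∏ q ∈ S.filter (fun q => p < q), ((q:ℚ) - p)) *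
          ∏ q ∈ T, ((q:ℚ) - p))) *
        ∏ p ∈ T, ∏ q ∈ T.filter (fun q => p < q), ((q:ℚ) - p) := by
        congr 1
        · apply Finset.prod_congr rfl
          intro p hp
          rw [h1 p hp,
            Finset.prod_union (Finset.disjoint_of_subset_left (Finset.filter_subset _ _) hd)]
        · exact Finset.prod_congr rfl (fun p hp => by rw [h2 p hp])
    _ = _ := by rw [Finset.prod_mul_distrib]; ring

lemma Pfun_image_add (S : Finset ℤ) (t : ℤ) : Pfun (S.image (· + t)) = Pfun S := by
  unfold Pfun
  rw [Finset.prod_image (by intro x _ y _ h; exact add_right_cancel h)]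
  apply Finset.prod_congr rfl
  intro p hp
  have : (S.image (· + t)).filter (fun q => p + t < q)
      = (S.filter (fun q => p < q)).image (· + t) := by
    ext q
    simp only [Finset.mem_filter, Finset.mem_image]
    constructor
    · rintro ⟨⟨y, hy, rfl⟩, hlt⟩
      exact ⟨y, ⟨hy, by omega⟩, rfl⟩
    · rintro ⟨y, ⟨hy, hlt⟩, rfl⟩
      exact ⟨⟨y, hy, rfl⟩, by omega⟩
  rw [this, Finset.prod_image (by intro x _ y _ h; exact add_right_cancel h)]
  apply Finset.prod_congr rfl
  intro q hq
  push_cast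
  ring

lemma crossP_union_left {S T : Finset ℤ} (U : Finset ℤ) (hd : Disjoint S T) :
    crossP (S ∪ T) U = crossP S U * crossP T U := by
  unfold crossP
  exact Finset.prod_union hd

lemma Tcount_triple (S1 S2 S3 : Finset ℤ)
    (h12 : ∀ p ∈ S1, ∀ q ∈ S2, p < q)
    (h13 : ∀ p ∈ S1, ∀ q ∈ S3, p < q)
    (h23 : ∀ p ∈ S2, ∀ q ∈ S3, p < q) :
    Tcount (S1 ∪ S2 ∪ S3) =
      (Pfun S1 * Pfun S2 * Pfun S3 /
        (hyperfac (S1.card + S2.card + S3.card) : ℚ)) *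
      (crossP S1 S2 * crossP S1 S3 * crossP S2 S3) := by
  have h123 : ∀ p ∈ S1 ∪ S2, ∀ q ∈ S3, p < q := by
    intro p hp q hq
    rcases Finset.mem_union.1 hp with h | h
    · exact h13 p h q hq
    · exact h23 p h q hq
  have hd12 : Disjoint S1 S2 := sep_disjoint h12
  have hd : Disjoint (S1 ∪ S2) S3 := sep_disjoint h123
  have hcard : (S1 ∪ S2 ∪ S3).card = S1.card + S2.card + S3.card := by
    rw [Finset.card_union_of_disjoint hd, Finset.card_union_of_disjoint hd12]
  rw [Tcount_eq, hcard]
  show Pfun (S1 ∪ S2 ∪ S3) / _ = _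
  rw [Pfun_union h123, Pfun_union h12, crossP_union_left S3 hd12]
  ring

/-! ### τ and blocks -/

lemma tau_zero (a : ℕ → ℕ) : tau a 0 = 0 := by unfold tau; simp

lemma tau_one (a : ℕ → ℕ) : tau a 1 = a 1 := by
  unfold tau
  rw [Finset.Icc_self, Finset.sum_singleton]

lemma tau_succ (a : ℕ → ℕ) (j : ℕ) : tau a (j + 1) = tau a j + a (j + 1) := by
  unfold tau; rw [Finset.sum_Icc_succ_top (by omega)]

lemma tau_two (a : ℕ → ℕ) : tau a 2 = a 1 + a 2 := by
  rw [show (2:ℕ) = 1 + 1 by norm_num, tau_succ, tau_one]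

lemma tau_mono (a : ℕ → ℕ) : Monotone (tau a) := by
  intro i j hij
  unfold tau
  exact Finset.sum_le_sum_of_subset (Finset.Icc_subset_Icc_right hij)

lemma tau_shift (a : ℕ → ℕ) (j : ℕ) :
    (tau (fun i => a (i + 1)) j : ℤ) = (tau a (j + 1) : ℤ) - a 1 := by
  induction j with
  | zero => rw [tau_zero, tau_one]; simp
  | succ n ih =>
    rw [tau_succ, tau_succ]
    push_cast
    omega

lemma sum_split (l : ℕ) (a : ℕ → ℕ) :
    evenSum l a + oddSum l a = tau a (2 * l) := by
  induction l with
  | zero => rw [Nat.mul_zero, tau_zero]; unfold evenSum oddSum; simp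
  | succ n ih =>
    unfold evenSum oddSum
    rw [Finset.sum_range_succ, Finset.sum_range_succ]
    unfold evenSum oddSum at ih
    have h1 : tau a (2 * (n+1)) = tau a (2*n+1) + a (2*n+2) := by
      rw [show 2*(n+1) = (2*n+1)+1 by ring]; exact tau_succ a (2*n+1)
    have h2 : tau a (2*n+1) = tau a (2*n) + a (2*n+1) := tau_succ a (2*n)
    omega

lemma blocksEven_image (l : ℕ) (a : ℕ → ℕ) (o : ℤ) :
    blocksEven l a o = (blocksEven l a 0).image (· + o) := by
  unfold blocksEven
  rw [Finset.biUnion_image]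
  apply Finset.biUnion_congr rfl
  intro i _
  rw [Finset.image_add_right_Icc]
  congr 1 <;> omega

lemma blocksOdd_image (l : ℕ) (a : ℕ → ℕ) (o : ℤ) :
    blocksOdd l a o = (blocksOdd l a 0).image (· + o) := by
  unfold blocksOdd
  rw [Finset.biUnion_image]
  apply Finset.biUnion_congr rfl
  intro i _
  rw [Finset.image_add_right_Icc]
  congr 1 <;> omega

lemma blocksEven_card (l : ℕ) (a : ℕ → ℕ) (o : ℤ) :
    (blocksEven l a o).card = evenSum l a := by
  unfold blocksEven evenSum
  rw [Finset.card_biUnion]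
  · apply Finset.sum_congr rfl
    intro i _
    rw [Int.card_Icc]
    have h2 : tau a (2*i+2) = tau a (2*i+1) + a (2*i+2) := by
      rw [show 2*i+2 = 2*i+1+1 by omega]; exact tau_succ a (2*i+1)
    omega
  · intro i _ j _ hij
    rcases lt_or_gt_of_ne hij with h | h
    · have : tau a (2*i+2) ≤ tau a (2*j+1) := tau_mono a (by omega)
      rw [Function.onFun, Finset.disjoint_left]
      intro x hx hx'
      simp only [Finset.mem_Icc] at hx hx'
      omega
    · have : tau a (2*j+2) ≤ tau a (2*i+1) := tau_mono a (by omega)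
      rw [Function.onFun, Finset.disjoint_left]
      intro x hx hx'
      simp only [Finset.mem_Icc] at hx hx'
      omega

lemma blocksOdd_card (l : ℕ) (a : ℕ → ℕ) (o : ℤ) :
    (blocksOdd l a o).card = oddSum l a := by
  unfold blocksOdd oddSum
  rw [Finset.card_biUnion]
  · apply Finset.sum_congr rfl
    intro i _
    rw [Int.card_Icc]
    have h2 : tau a (2*i+1) = tau a (2*i) + a (2*i+1) := tau_succ a (2*i)
    omega
  · intro i _ j _ hij
    rcases lt_or_gt_of_ne hij with h | h
    · have : tau a (2*i+1) ≤ tau a (2*j) := tau_mono a (by omega)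
      rw [Function.onFun, Finset.disjoint_left]
      intro x hx hx'
      simp only [Finset.mem_Icc] at hx hx'
      omega
    · have : tau a (2*j+1) ≤ tau a (2*i) := tau_mono a (by omega)
      rw [Function.onFun, Finset.disjoint_left]
      intro x hx hx'
      simp only [Finset.mem_Icc] at hx hx'
      omega

lemma blocksEven_subset (l : ℕ) (a : ℕ → ℕ) (o : ℤ) :
    blocksEven l a o ⊆ Finset.Icc (o + 1) (o + (tau a (2 * l) : ℤ)) := by
  unfold blocksEven
  intro x hx
  simp only [Finset.mem_biUnion, Finset.mem_Icc] at hx ⊢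
  obtain ⟨i, hi, h1, h2⟩ := hx
  simp only [Finset.mem_range] at hi
  have g1 : (0:ℤ) ≤ (tau a (2*i+1) : ℤ) := by positivity
  have g2 : tau a (2*i+2) ≤ tau a (2*l) := tau_mono a (by omega)
  omega

lemma blocksOdd_subset (l : ℕ) (a : ℕ → ℕ) (o : ℤ) :
    blocksOdd l a o ⊆ Finset.Icc (o + 1) (o + (tau a (2 * l) : ℤ)) := by
  unfold blocksOdd
  intro x hx
  simp only [Finset.mem_biUnion, Finset.mem_Icc] at hx ⊢
  obtain ⟨i, hi, h1, h2⟩ := hx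
  simp only [Finset.mem_range] at hi
  have g1 : (0:ℤ) ≤ (tau a (2*i) : ℤ) := by positivity
  have g2 : tau a (2*i+1) ≤ tau a (2*l) := tau_mono a (by omega)
  omega

lemma blocksOdd_shift (l : ℕ) (a : ℕ → ℕ) :
    blocksOdd l (fun i => a (i + 1)) 0 = (blocksEven l a 0).image (· + (-(a 1 : ℤ))) := by
  unfold blocksOdd blocksEven
  rw [Finset.biUnion_image]
  apply Finset.biUnion_congr rfl
  intro i _
  rw [Finset.image_add_right_Icc]
  have h1 := tau_shift a (2 * i)
  have h2 := tau_shift a (2 * i + 1)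
  rw [show 2*i+1+1 = 2*i+2 by omega] at h2
  congr 1 <;> omega

lemma sep_blocksEven (l1 l2 : ℕ) (f g : ℕ → ℕ) (o1 o2 : ℤ)
    (h : o1 + (tau f (2*l1) : ℤ) ≤ o2) :
    ∀ p ∈ blocksEven l1 f o1, ∀ q ∈ blocksEven l2 g o2, p < q := by
  intro p hp q hq
  have h1 := blocksEven_subset l1 f o1 hp
  have h2 := blocksEven_subset l2 g o2 hq
  simp only [Finset.mem_Icc] at h1 h2
  omega

lemma sep_blocksOdd (l1 l2 : ℕ) (f g : ℕ → ℕ) (o1 o2 : ℤ)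
    (h : o1 + (tau f (2*l1) : ℤ) ≤ o2) :
    ∀ p ∈ blocksOdd l1 f o1, ∀ q ∈ blocksOdd l2 g o2, p < q := by
  intro p hp q hq
  have h1 := blocksOdd_subset l1 f o1 hp
  have h2 := blocksOdd_subset l2 g o2 hq
  simp only [Finset.mem_Icc] at h1 h2
  omega

/-! ### Interval values -/

lemma Pfun_Icc (n : ℕ) : Pfun (Finset.Icc (1:ℤ) n) = hyperfac n := by
  induction n with
  | zero => unfold Pfun hyperfac; simp
  | succ n ih =>
    have key : Finset.Icc (1:ℤ) (n+1) = Finset.Icc (1:ℤ) n ∪ {((n:ℤ)+1)} := by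
      ext q; simp only [Finset.mem_union, Finset.mem_Icc, Finset.mem_singleton]; push_cast; omega
    have hlt : ∀ p ∈ Finset.Icc (1:ℤ) n, ∀ q ∈ ({((n:ℤ)+1)} : Finset ℤ), p < q := by
      intro p hp q hq
      simp only [Finset.mem_Icc] at hp
      simp only [Finset.mem_singleton] at hq
      omega
    rw [show ((n+1 : ℕ) : ℤ) = (n:ℤ)+1 by push_cast; ring, key, Pfun_union hlt]
    have hP1 : Pfun ({((n:ℤ)+1)} : Finset ℤ) = 1 := by
      unfold Pfun
      rw [Finset.prod_singleton, Finset.filter_singleton, if_neg (lt_irrefl _)]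
      simp
    have castprod : ∀ m : ℕ, ∏ p ∈ Finset.Icc (1:ℤ) m, (p:ℚ) = Nat.factorial m := by
      intro m
      induction m with
      | zero => simp
      | succ m ihm =>
        have key2 : Finset.Icc (1:ℤ) ((m:ℤ)+1) = Finset.Icc (1:ℤ) m ∪ {((m:ℤ)+1)} := by
          ext q; simp only [Finset.mem_union, Finset.mem_Icc, Finset.mem_singleton]; omega
        have hd : Disjoint (Finset.Icc (1:ℤ) m) ({((m:ℤ)+1)} : Finset ℤ) := by
          rw [Finset.disjoint_left]
          intro q hq hq'
          simp only [Finset.mem_Icc] at hq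
          simp only [Finset.mem_singleton] at hq'
          omega
        rw [show ((m+1 : ℕ) : ℤ) = (m:ℤ)+1 by push_cast; ring, key2, Finset.prod_union hd,
          Finset.prod_singleton, ihm, Nat.factorial_succ]
        push_cast
        ring
    have hcross : crossP (Finset.Icc (1:ℤ) n) {((n:ℤ)+1)} = Nat.factorial n := by
      unfold crossP
      simp only [Finset.prod_singleton]
      rw [← castprod n]
      apply Finset.prod_nbij' (fun p => (n:ℤ)+1-p) (fun p => (n:ℤ)+1-p)
      · intro p hp; simp only [Finset.mem_Icc] at hp ⊢; omega
      · intro p hp; simp only [Finset.mem_Icc] at hp ⊢; omega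
      · intro p _; omega
      · intro p _; omega
      · intro p hp; push_cast; ring
    rw [hP1, hcross, ih]
    unfold hyperfac
    rw [Finset.prod_range_succ]
    push_cast
    ring

lemma seq2_one (u v : ℕ) : seq2 u v 1 = u := rfl

lemma seq2_two (u v : ℕ) : seq2 u v 2 = v := rfl

lemma evenSum_one (f : ℕ → ℕ) : evenSum 1 f = f 2 := by
  unfold evenSum; simp

lemma oddSum_one (f : ℕ → ℕ) : oddSum 1 f = f 1 := by
  unfold oddSum; simp

lemma blocksEven_one (f : ℕ → ℕ) :
    blocksEven 1 f 0 = (Finset.Icc (1:ℤ) (f 2)).image (· + (f 1 : ℤ)) := by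
  unfold blocksEven
  rw [Finset.range_one, Finset.singleton_biUnion, Finset.image_add_right_Icc]
  have e1 : tau f (2*0+1) = f 1 := tau_one f
  have e2 : tau f (2*0+2) = f 1 + f 2 := tau_two f
  congr 1 <;> omega

lemma blocksOdd_one (f : ℕ → ℕ) :
    blocksOdd 1 f 0 = Finset.Icc (1:ℤ) (f 1) := by
  unfold blocksOdd
  rw [Finset.range_one, Finset.singleton_biUnion]
  have e1 : tau f (2*0) = 0 := tau_zero f
  have e2 : tau f (2*0+1) = f 1 := tau_one f
  congr 1 <;> omega

lemma Pfun_blocksEven_one (f : ℕ → ℕ) : Pfun (blocksEven 1 f 0) = hyperfac (f 2) := by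
  rw [blocksEven_one, Pfun_image_add, Pfun_Icc]

lemma Pfun_blocksOdd_one (f : ℕ → ℕ) : Pfun (blocksOdd 1 f 0) = hyperfac (f 1) := by
  rw [blocksOdd_one, Pfun_Icc]

end Aux
/-! ### Analysis -/

section Analysis

lemma factor_tendsto (c : ℤ) :
    Tendsto (fun t : ℤ => ((t : ℝ) + c) / t) atTop (𝓝 1) := by
  have hinv : Tendsto (fun t : ℤ => ((t : ℝ))⁻¹) atTop (𝓝 0) :=
    tendsto_inv_atTop_zero.comp tendsto_intCast_atTop_atTop
  have h : Tendsto (fun t : ℤ => 1 + (c : ℝ) * ((t : ℝ))⁻¹) atTop (𝓝 (1 + (c:ℝ) * 0)) :=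
    tendsto_const_nhds.add (tendsto_const_nhds.mul hinv)
  rw [mul_zero, add_zero] at h
  apply h.congr'
  filter_upwards [eventually_ge_atTop (1 : ℤ)] with t ht
  have ht' : (t : ℝ) ≠ 0 := by
    have : (1:ℝ) ≤ (t:ℝ) := by exact_mod_cast ht
    linarith
  field_simp

lemma crossR_div_pow_tendsto (S T : Finset ℤ) :
    Tendsto (fun t : ℤ => crossR S T t / (t : ℝ) ^ (S.card * T.card)) atTop (𝓝 1) := by
  have key : Tendsto (fun t : ℤ => ∏ p ∈ S, ∏ q ∈ T, (((t : ℝ) + q - p) / t)) atTop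
      (𝓝 (∏ p ∈ S, ∏ q ∈ T, 1)) := by
    apply tendsto_finset_prod
    intro p _
    apply tendsto_finset_prod
    intro q _
    exact (factor_tendsto (q - p)).congr (fun t => by push_cast; ring_nf)
  simp only [Finset.prod_const_one] at key
  apply key.congr'
  filter_upwards [eventually_ge_atTop (1 : ℤ)] with t ht
  calc ∏ p ∈ S, ∏ q ∈ T, (((t : ℝ) + q - p) / t)
      = ∏ p ∈ S, ((∏ q ∈ T, ((t : ℝ) + q - p)) / ∏ _q ∈ T, (t:ℝ)) :=
        Finset.prod_congr rfl fun p _ => Finset.prod_div_distrib _ _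
    _ = (∏ p ∈ S, ∏ q ∈ T, ((t : ℝ) + q - p)) / ∏ _p ∈ S, ∏ _q ∈ T, (t:ℝ) :=
        Finset.prod_div_distrib _ _
    _ = crossR S T t / (t : ℝ) ^ (S.card * T.card) := by
        rw [crossR, Finset.prod_const, Finset.prod_const, ← pow_mul, mul_comm]

lemma div_div_same' {a b c : ℝ} (hc : c ≠ 0) : (a / c) / (b / c) = a / b := by
  rcases eq_or_ne b 0 with rfl | hb
  · simp
  · field_simp

lemma classF_tendsto (S1 T1 S2 T2 U1 V1 U2 V2 : Finset ℤ)
    (hk : S1.card * T1.card + S2.card * T2.card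
        = U1.card * V1.card + U2.card * V2.card) :
    Tendsto (fun t : ℤ => (crossR S1 T1 t * crossR S2 T2 t) /
      (crossR U1 V1 t * crossR U2 V2 t)) atTop (𝓝 1) := by
  have half : ∀ A B C D : Finset ℤ, Tendsto (fun t : ℤ =>
      (crossR A B t * crossR C D t) / (t:ℝ)^(A.card * B.card + C.card * D.card))
      atTop (𝓝 1) := by
    intro A B C D
    have h := (crossR_div_pow_tendsto A B).mul (crossR_div_pow_tendsto C D)
    rw [mul_one] at h
    apply h.congr
    intro t
    rw [div_mul_div_comm, ← pow_add]
  have hN := half S1 T1 S2 T2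
  have hD := half U1 V1 U2 V2
  rw [← hk] at hD
  have h := hN.div hD one_ne_zero
  rw [div_one] at h
  apply h.congr'
  filter_upwards [eventually_ge_atTop (1 : ℤ)] with t ht
  have ht' : ((t:ℝ))^(S1.card * T1.card + S2.card * T2.card) ≠ 0 := by
    have : (1:ℝ) ≤ (t:ℝ) := by exact_mod_cast ht
    positivity
  exact div_div_same' ht'

lemma crossP_cast2 (S T : Finset ℤ) (s t : ℤ) :
    ((crossP (S.image (· + s)) (T.image (· + t)) : ℚ) : ℝ) = crossR S T (t - s) := by
  unfold crossP crossR
  push_cast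
  rw [Finset.prod_image (by intro x _ y _ h; exact add_right_cancel h)]
  apply Finset.prod_congr rfl
  intro p _
  rw [Finset.prod_image (by intro x _ y _ h; exact add_right_cancel h)]
  apply Finset.prod_congr rfl
  intro q _
  push_cast
  ring

lemma crossP_cast1 (S T : Finset ℤ) (t : ℤ) :
    ((crossP S (T.image (· + t)) : ℚ) : ℝ) = crossR S T t := by
  have h := crossP_cast2 S T 0 t
  rw [show S.image (· + (0:ℤ)) = S by simp, sub_zero] at h
  exact h

lemma crossR_ne_zero {S T : Finset ℤ} {t : ℤ}
    (h : ∀ p ∈ S, ∀ q ∈ T.image (· + t), p < q) : crossR S T t ≠ 0 := by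
  rw [← crossP_cast1]
  have := crossP_pos h
  positivity

lemma Pfun_cast_ne (S : Finset ℤ) : ((Pfun S : ℚ) : ℝ) ≠ 0 :=
  Rat.cast_ne_zero.2 (ne_of_gt (Pfun_pos S))

lemma hyperfac_cast_ne (n : ℕ) : ((hyperfac n : ℕ) : ℝ) ≠ 0 :=
  Nat.cast_ne_zero.2 (hyperfac_pos n).ne'

end Analysis

/-! ### The master formula for `Mreg` -/

section Master

def oCval (X Z la : ℕ) (a : ℕ → ℕ) : ℤ := (tau a (2*la) : ℤ) + ((X+Z)/2 : ℕ)

def oBval (X Z la lc : ℕ) (a c : ℕ → ℕ) : ℤ :=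
  (tau a (2*la) : ℤ) + (tau c (2*lc) : ℤ) + X + Z

lemma Mreg_formula (X Z la lc lb : ℕ) (a c b : ℕ → ℕ) :
    Mreg X Z la lc lb a c b =
      ((Pfun (blocksEven la a 0) * Pfun (blocksEven lc c 0) * Pfun (blocksEven lb b 0) /
        (hyperfac (evenSum la a + evenSum lc c + evenSum lb b) : ℚ)) *
       (Pfun (blocksOdd la a 0) * Pfun (blocksOdd lc c 0) * Pfun (blocksOdd lb b 0) /
        (hyperfac (oddSum la a + oddSum lc c + oddSum lb b) : ℚ))) *
      ((crossP (blocksEven la a 0) (blocksEven lc c (oCval X Z la a)) *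
        crossP (blocksEven la a 0) (blocksEven lb b (oBval X Z la lc a c)) *
        crossP (blocksEven lc c (oCval X Z la a)) (blocksEven lb b (oBval X Z la lc a c))) *
       (crossP (blocksOdd la a 0) (blocksOdd lc c (oCval X Z la a)) *
        crossP (blocksOdd la a 0) (blocksOdd lb b (oBval X Z la lc a c)) *
        crossP (blocksOdd lc c (oCval X Z la a)) (blocksOdd lb b (oBval X Z la lc a c)))) := by
  have hA : (∑ i ∈ Finset.Icc 1 (2 * la), a i) = tau a (2*la) := rfl
  have hCs : (∑ i ∈ Finset.Icc 1 (2 * lc), c i) = tau c (2*lc) := rfl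
  have hoC : ((tau a (2*la) : ℕ) : ℤ) + (((X + Z) / 2 : ℕ) : ℤ) = oCval X Z la a := rfl
  have hoB : ((tau a (2*la) : ℕ) : ℤ) + ((tau c (2*lc) : ℕ) : ℤ) + (X:ℤ) + (Z:ℤ)
      = oBval X Z la lc a c := rfl
  have hCle : (0:ℤ) + (tau a (2*la) : ℤ) ≤ oCval X Z la a := by
    unfold oCval; omega
  have hBle : (0:ℤ) + (tau a (2*la) : ℤ) ≤ oBval X Z la lc a c := by
    unfold oBval; omega
  have hCBle : oCval X Z la a + (tau c (2*lc) : ℤ) ≤ oBval X Z la lc a c := by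
    unfold oCval oBval
    have : (X+Z)/2 ≤ X + Z := Nat.div_le_self _ _
    push_cast
    omega
  simp only [Mreg, hA, hCs, hoC, hoB]
  rw [Tcount_triple _ _ _
      (sep_blocksEven la lc a c 0 _ (by simpa using hCle))
      (sep_blocksEven la lb a b 0 _ (by simpa using hBle))
      (sep_blocksEven lc lb c b _ _ hCBle),
    Tcount_triple _ _ _
      (sep_blocksOdd la lc a c 0 _ (by simpa using hCle))
      (sep_blocksOdd la lb a b 0 _ (by simpa using hBle))
      (sep_blocksOdd lc lb c b _ _ hCBle)]
  rw [blocksEven_card, blocksEven_card, blocksEven_card,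
    blocksOdd_card, blocksOdd_card, blocksOdd_card,
    show Pfun (blocksEven lc c (oCval X Z la a)) = Pfun (blocksEven lc c 0) by
      rw [blocksEven_image, Pfun_image_add],
    show Pfun (blocksEven lb b (oBval X Z la lc a c)) = Pfun (blocksEven lb b 0) by
      rw [blocksEven_image, Pfun_image_add],
    show Pfun (blocksOdd lc c (oCval X Z la a)) = Pfun (blocksOdd lc c 0) by
      rw [blocksOdd_image, Pfun_image_add],
    show Pfun (blocksOdd lb b (oBval X Z la lc a c)) = Pfun (blocksOdd lb b 0) by
      rw [blocksOdd_image, Pfun_image_add]]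
  ring

lemma crossR_blocksEven_ne (l1 l2 : ℕ) (f g : ℕ → ℕ) (t : ℤ)
    (h : (tau f (2*l1) : ℤ) ≤ t) :
    crossR (blocksEven l1 f 0) (blocksEven l2 g 0) t ≠ 0 := by
  apply crossR_ne_zero
  intro p hp q hq
  rw [← blocksEven_image] at hq
  exact sep_blocksEven l1 l2 f g 0 t (by omega) p hp q hq

lemma crossR_blocksOdd_ne (l1 l2 : ℕ) (f g : ℕ → ℕ) (t : ℤ)
    (h : (tau f (2*l1) : ℤ) ≤ t) :
    crossR (blocksOdd l1 f 0) (blocksOdd l2 g 0) t ≠ 0 := by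
  apply crossR_ne_zero
  intro p hp q hq
  rw [← blocksOdd_image] at hq
  exact sep_blocksOdd l1 l2 f g 0 t (by omega) p hp q hq

lemma ratio_identity
    {PE1 PE2 PE3 PO1 PO2 PO3 He1 He2 He3 Ho1 Ho2 Ho3 HE HO
     cn1 cn2 cn3 cn4 cn5 cn6 cd1 cd2 cd3 cd4 cd5 cd6 : ℝ}
    (hHE : HE ≠ 0) (hHO : HO ≠ 0)
    (h1 : Ho1 ≠ 0) (h2 : Ho2 ≠ 0) (h3 : Ho3 ≠ 0)
    (h4 : He1 ≠ 0) (h5 : He2 ≠ 0) (h6 : He3 ≠ 0)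
    (g1 : cd1 ≠ 0) (g2 : cd2 ≠ 0) (g3 : cd3 ≠ 0)
    (g4 : cd4 ≠ 0) (g5 : cd5 ≠ 0) (g6 : cd6 ≠ 0) :
    (PE1 * PE2 * PE3 / HE * (PO1 * PO2 * PO3 / HO) *
      (cn1 * cn2 * cn3 * (cn4 * cn5 * cn6))) /
    (Ho1 * Ho2 * Ho3 / HO * (He1 * He2 * He3 / HE) *
      (cd1 * cd2 * cd3 * (cd4 * cd5 * cd6))) =
    PO1 / Ho1 * (PE1 / He1) * (PO3 / Ho3) * (PE3 / He3) * (PO2 / Ho2) * (PE2 / He2) *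
    (cn1 * cn4 / (cd1 * cd4) * (cn2 * cn5 / (cd2 * cd5) * (cn3 * cn6 / (cd3 * cd6)))) := by
  simp only [div_eq_mul_inv, mul_inv, inv_inv]
  have e1 : HE⁻¹ * HE = 1 := inv_mul_cancel₀ hHE
  have e2 : HO⁻¹ * HO = 1 := inv_mul_cancel₀ hHO
  linear_combination (PO1 / Ho1 * (PE1 / He1) * (PO3 / Ho3) * (PE3 / He3) * (PO2 / Ho2) * (PE2 / He2) *
    (cn1 * cn4 / (cd1 * cd4) * (cn2 * cn5 / (cd2 * cd5) * (cn3 * cn6 / (cd3 * cd6)))) * (HO⁻¹ * HO)) * e1 +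
    (PO1 / Ho1 * (PE1 / He1) * (PO3 / Ho3) * (PE3 / He3) * (PO2 / Ho2) * (PE2 / He2) *
    (cn1 * cn4 / (cd1 * cd4) * (cn2 * cn5 / (cd2 * cd5) * (cn3 * cn6 / (cd3 * cd6))))) * e2

end Master

/-! ### The main theorem -/

set_option maxHeartbeats 2000000 in
/-- **Dual of MacMahon's theorem for three ferns (Theorem 2.10).**
For fixed ferns `a, c, b` with `∑ a_i = ∑ b_j` and fixed positive reals
`x, z`, the ratio of the numbers of lozenge tilings of
`R_{⌊xN⌋,0,⌊zN⌋}(a; c; b)` and of its normalization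
`R_{⌊xN⌋,0,⌊zN⌋}(e_a,o_a; e_c,o_c; e_b,o_b)` converges, as `N → ∞`, to
`s(a_1,…,a_{m−1}) s(a_2,…,a_m) s(b_1,…,b_{n−1}) s(b_2,…,b_n)
 s(c_1,…,c_{k−1}) s(c_2,…,c_k)`. -/
theorem dual_macmahon_three_ferns (x z : ℝ) (hx : 0 < x) (hz : 0 < z)
    (la lc lb : ℕ) (a c b : ℕ → ℕ)
    (hab : ∑ i ∈ Finset.Icc 1 (2 * la), a i = ∑ i ∈ Finset.Icc 1 (2 * lb), b i) :
    Tendsto (fun N : ℕ =>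
        ((Mreg (Int.toNat ⌊x * N⌋) (Int.toNat ⌊z * N⌋) la lc lb a c b /
          Mreg (Int.toNat ⌊x * N⌋) (Int.toNat ⌊z * N⌋) 1 1 1
            (seq2 (evenSum la a) (oddSum la a))
            (seq2 (evenSum lc c) (oddSum lc c))
            (seq2 (evenSum lb b) (oddSum lb b)) : ℚ) : ℝ))
      atTop
      (𝓝 (((Tcount (blocksOdd la a 0) *
            Tcount (blocksOdd la (fun i => a (i + 1)) 0) *
            Tcount (blocksOdd lb b 0) *
            Tcount (blocksOdd lb (fun i => b (i + 1)) 0) *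
            Tcount (blocksOdd lc c 0) *
            Tcount (blocksOdd lc (fun i => c (i + 1)) 0) : ℚ) : ℝ))) := by
  clear hab
  -- the key pointwise identity
  have key : ∀ N : ℕ,
      ((Mreg (Int.toNat ⌊x * N⌋) (Int.toNat ⌊z * N⌋) la lc lb a c b /
        Mreg (Int.toNat ⌊x * N⌋) (Int.toNat ⌊z * N⌋) 1 1 1 (seq2 (evenSum la a) (oddSum la a)) (seq2 (evenSum lc c) (oddSum lc c)) (seq2 (evenSum lb b) (oddSum lb b)) : ℚ) : ℝ) =
      (((Tcount (blocksOdd la a 0) *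
            Tcount (blocksOdd la (fun i => a (i + 1)) 0) *
            Tcount (blocksOdd lb b 0) *
            Tcount (blocksOdd lb (fun i => b (i + 1)) 0) *
            Tcount (blocksOdd lc c 0) *
            Tcount (blocksOdd lc (fun i => c (i + 1)) 0) : ℚ)) : ℝ) *
      (((crossR (blocksEven la a 0) (blocksEven lc c 0) (oCval (Int.toNat ⌊x * N⌋) (Int.toNat ⌊z * N⌋) la a) * crossR (blocksOdd la a 0) (blocksOdd lc c 0) (oCval (Int.toNat ⌊x * N⌋) (Int.toNat ⌊z * N⌋) la a)) /
        (crossR (blocksEven 1 (seq2 (evenSum la a) (oddSum la a)) 0) (blocksEven 1 (seq2 (evenSum lc c) (oddSum lc c)) 0) (oCval (Int.toNat ⌊x * N⌋) (Int.toNat ⌊z * N⌋) la a) * crossR (blocksOdd 1 (seq2 (evenSum la a) (oddSum la a)) 0) (blocksOdd 1 (seq2 (evenSum lc c) (oddSum lc c)) 0) (oCval (Int.toNat ⌊x * N⌋) (Int.toNat ⌊z * N⌋) la a))) *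
       (((crossR (blocksEven la a 0) (blocksEven lb b 0) (oBval (Int.toNat ⌊x * N⌋) (Int.toNat ⌊z * N⌋) la lc a c) * crossR (blocksOdd la a 0) (blocksOdd lb b 0) (oBval (Int.toNat ⌊x * N⌋) (Int.toNat ⌊z * N⌋) la lc a c)) /
        (crossR (blocksEven 1 (seq2 (evenSum la a) (oddSum la a)) 0) (blocksEven 1 (seq2 (evenSum lb b) (oddSum lb b)) 0) (oBval (Int.toNat ⌊x * N⌋) (Int.toNat ⌊z * N⌋) la lc a c) * crossR (blocksOdd 1 (seq2 (evenSum la a) (oddSum la a)) 0) (blocksOdd 1 (seq2 (evenSum lb b) (oddSum lb b)) 0) (oBval (Int.toNat ⌊x * N⌋) (Int.toNat ⌊z * N⌋) la lc a c))) *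
        ((crossR (blocksEven lc c 0) (blocksEven lb b 0) ((oBval (Int.toNat ⌊x * N⌋) (Int.toNat ⌊z * N⌋) la lc a c) - (oCval (Int.toNat ⌊x * N⌋) (Int.toNat ⌊z * N⌋) la a)) * crossR (blocksOdd lc c 0) (blocksOdd lb b 0) ((oBval (Int.toNat ⌊x * N⌋) (Int.toNat ⌊z * N⌋) la lc a c) - (oCval (Int.toNat ⌊x * N⌋) (Int.toNat ⌊z * N⌋) la a))) /
        (crossR (blocksEven 1 (seq2 (evenSum lc c) (oddSum lc c)) 0) (blocksEven 1 (seq2 (evenSum lb b) (oddSum lb b)) 0) ((oBval (Int.toNat ⌊x * N⌋) (Int.toNat ⌊z * N⌋) la lc a c) - (oCval (Int.toNat ⌊x * N⌋) (Int.toNat ⌊z * N⌋) la a)) * crossR (blocksOdd 1 (seq2 (evenSum lc c) (oddSum lc c)) 0) (blocksOdd 1 (seq2 (evenSum lb b) (oddSum lb b)) 0) ((oBval (Int.toNat ⌊x * N⌋) (Int.toNat ⌊z * N⌋) la lc a c) - (oCval (Int.toNat ⌊x * N⌋) (Int.toNat ⌊z * N⌋) la a)))))) := by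
    intro N
    have htauA : tau (seq2 (evenSum la a) (oddSum la a)) (2*1) = tau a (2*la) := by
      rw [show 2*1 = 2 by norm_num, tau_two, seq2_one, seq2_two]
      exact sum_split la a
    have htauC : tau (seq2 (evenSum lc c) (oddSum lc c)) (2*1) = tau c (2*lc) := by
      rw [show 2*1 = 2 by norm_num, tau_two, seq2_one, seq2_two]
      exact sum_split lc c
    have hoCden : oCval (Int.toNat ⌊x * N⌋) (Int.toNat ⌊z * N⌋) 1 (seq2 (evenSum la a) (oddSum la a)) = (oCval (Int.toNat ⌊x * N⌋) (Int.toNat ⌊z * N⌋) la a) := by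
      unfold oCval; rw [htauA]
    have hoBden : oBval (Int.toNat ⌊x * N⌋) (Int.toNat ⌊z * N⌋) 1 1 (seq2 (evenSum la a) (oddSum la a)) (seq2 (evenSum lc c) (oddSum lc c)) = (oBval (Int.toNat ⌊x * N⌋) (Int.toNat ⌊z * N⌋) la lc a c) := by
      unfold oBval; rw [htauA, htauC]
    have hta : (tau a (2*la) : ℤ) ≤ (oCval (Int.toNat ⌊x * N⌋) (Int.toNat ⌊z * N⌋) la a) := by unfold oCval; omega
    have htb : (tau a (2*la) : ℤ) ≤ (oBval (Int.toNat ⌊x * N⌋) (Int.toNat ⌊z * N⌋) la lc a c) := by unfold oBval; omega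
    have htc : (tau c (2*lc) : ℤ) ≤ (oBval (Int.toNat ⌊x * N⌋) (Int.toNat ⌊z * N⌋) la lc a c) - (oCval (Int.toNat ⌊x * N⌋) (Int.toNat ⌊z * N⌋) la a) := by
      unfold oCval oBval
      have : ((Int.toNat ⌊x * N⌋) + (Int.toNat ⌊z * N⌋)) / 2 ≤ (Int.toNat ⌊x * N⌋) + (Int.toNat ⌊z * N⌋) := Nat.div_le_self _ _
      push_cast
      omega
    have hta' : (tau (seq2 (evenSum la a) (oddSum la a)) (2*1) : ℤ) ≤ (oCval (Int.toNat ⌊x * N⌋) (Int.toNat ⌊z * N⌋) la a) := by rw [htauA]; exact hta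
    have htb' : (tau (seq2 (evenSum la a) (oddSum la a)) (2*1) : ℤ) ≤ (oBval (Int.toNat ⌊x * N⌋) (Int.toNat ⌊z * N⌋) la lc a c) := by rw [htauA]; exact htb
    have htc' : (tau (seq2 (evenSum lc c) (oddSum lc c)) (2*1) : ℤ) ≤ (oBval (Int.toNat ⌊x * N⌋) (Int.toNat ⌊z * N⌋) la lc a c) - (oCval (Int.toNat ⌊x * N⌋) (Int.toNat ⌊z * N⌋) la a) := by rw [htauC]; exact htc
    have hc1 := crossR_blocksEven_ne la lc a c _ hta
    have hc2 := crossR_blocksOdd_ne la lc a c _ hta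
    have hc3 := crossR_blocksEven_ne la lb a b _ htb
    have hc4 := crossR_blocksOdd_ne la lb a b _ htb
    have hc5 := crossR_blocksEven_ne lc lb c b _ htc
    have hc6 := crossR_blocksOdd_ne lc lb c b _ htc
    have hd1 := crossR_blocksEven_ne 1 1 (seq2 (evenSum la a) (oddSum la a)) (seq2 (evenSum lc c) (oddSum lc c)) _ hta'
    have hd2 := crossR_blocksOdd_ne 1 1 (seq2 (evenSum la a) (oddSum la a)) (seq2 (evenSum lc c) (oddSum lc c)) _ hta'
    have hd3 := crossR_blocksEven_ne 1 1 (seq2 (evenSum la a) (oddSum la a)) (seq2 (evenSum lb b) (oddSum lb b)) _ htb'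
    have hd4 := crossR_blocksOdd_ne 1 1 (seq2 (evenSum la a) (oddSum la a)) (seq2 (evenSum lb b) (oddSum lb b)) _ htb'
    have hd5 := crossR_blocksEven_ne 1 1 (seq2 (evenSum lc c) (oddSum lc c)) (seq2 (evenSum lb b) (oddSum lb b)) _ htc'
    have hd6 := crossR_blocksOdd_ne 1 1 (seq2 (evenSum lc c) (oddSum lc c)) (seq2 (evenSum lb b) (oddSum lb b)) _ htc'
    have hT1 : Tcount (blocksOdd la a 0)
        = Pfun (blocksOdd la a 0) / (hyperfac (oddSum la a) : ℚ) := by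
      rw [Tcount_eq, blocksOdd_card]
    have hT2 : Tcount (blocksOdd la (fun i => a (i + 1)) 0)
        = Pfun (blocksEven la a 0) / (hyperfac (evenSum la a) : ℚ) := by
      rw [blocksOdd_shift, Tcount_eq, Pfun_image_add,
        Finset.card_image_of_injective _ (add_left_injective _), blocksEven_card]
    have hT3 : Tcount (blocksOdd lb b 0)
        = Pfun (blocksOdd lb b 0) / (hyperfac (oddSum lb b) : ℚ) := by
      rw [Tcount_eq, blocksOdd_card]
    have hT4 : Tcount (blocksOdd lb (fun i => b (i + 1)) 0)
        = Pfun (blocksEven lb b 0) / (hyperfac (evenSum lb b) : ℚ) := by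
      rw [blocksOdd_shift, Tcount_eq, Pfun_image_add,
        Finset.card_image_of_injective _ (add_left_injective _), blocksEven_card]
    have hT5 : Tcount (blocksOdd lc c 0)
        = Pfun (blocksOdd lc c 0) / (hyperfac (oddSum lc c) : ℚ) := by
      rw [Tcount_eq, blocksOdd_card]
    have hT6 : Tcount (blocksOdd lc (fun i => c (i + 1)) 0)
        = Pfun (blocksEven lc c 0) / (hyperfac (evenSum lc c) : ℚ) := by
      rw [blocksOdd_shift, Tcount_eq, Pfun_image_add,
        Finset.card_image_of_injective _ (add_left_injective _), blocksEven_card]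
    rw [Mreg_formula, Mreg_formula, hoCden, hoBden,
      Pfun_blocksEven_one, Pfun_blocksEven_one, Pfun_blocksEven_one,
      Pfun_blocksOdd_one, Pfun_blocksOdd_one, Pfun_blocksOdd_one,
      hT1, hT2, hT3, hT4, hT5, hT6]
    simp only [evenSum_one, oddSum_one, seq2_one, seq2_two]
    rw [blocksEven_image lc c (oCval (Int.toNat ⌊x * N⌋) (Int.toNat ⌊z * N⌋) la a), blocksEven_image lb b (oBval (Int.toNat ⌊x * N⌋) (Int.toNat ⌊z * N⌋) la lc a c),
      blocksOdd_image lc c (oCval (Int.toNat ⌊x * N⌋) (Int.toNat ⌊z * N⌋) la a), blocksOdd_image lb b (oBval (Int.toNat ⌊x * N⌋) (Int.toNat ⌊z * N⌋) la lc a c),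
      blocksEven_image 1 (seq2 (evenSum lc c) (oddSum lc c)) (oCval (Int.toNat ⌊x * N⌋) (Int.toNat ⌊z * N⌋) la a), blocksEven_image 1 (seq2 (evenSum lb b) (oddSum lb b)) (oBval (Int.toNat ⌊x * N⌋) (Int.toNat ⌊z * N⌋) la lc a c),
      blocksOdd_image 1 (seq2 (evenSum lc c) (oddSum lc c)) (oCval (Int.toNat ⌊x * N⌋) (Int.toNat ⌊z * N⌋) la a), blocksOdd_image 1 (seq2 (evenSum lb b) (oddSum lb b)) (oBval (Int.toNat ⌊x * N⌋) (Int.toNat ⌊z * N⌋) la lc a c)]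
    push_cast
    rw [crossP_cast2 (blocksEven lc c 0) (blocksEven lb b 0) (oCval (Int.toNat ⌊x * N⌋) (Int.toNat ⌊z * N⌋) la a) (oBval (Int.toNat ⌊x * N⌋) (Int.toNat ⌊z * N⌋) la lc a c), crossP_cast2 (blocksOdd lc c 0) (blocksOdd lb b 0) (oCval (Int.toNat ⌊x * N⌋) (Int.toNat ⌊z * N⌋) la a) (oBval (Int.toNat ⌊x * N⌋) (Int.toNat ⌊z * N⌋) la lc a c),
      crossP_cast2 (blocksEven 1 (seq2 (evenSum lc c) (oddSum lc c)) 0) (blocksEven 1 (seq2 (evenSum lb b) (oddSum lb b)) 0) (oCval (Int.toNat ⌊x * N⌋) (Int.toNat ⌊z * N⌋) la a) (oBval (Int.toNat ⌊x * N⌋) (Int.toNat ⌊z * N⌋) la lc a c),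
      crossP_cast2 (blocksOdd 1 (seq2 (evenSum lc c) (oddSum lc c)) 0) (blocksOdd 1 (seq2 (evenSum lb b) (oddSum lb b)) 0) (oCval (Int.toNat ⌊x * N⌋) (Int.toNat ⌊z * N⌋) la a) (oBval (Int.toNat ⌊x * N⌋) (Int.toNat ⌊z * N⌋) la lc a c)]
    rw [crossP_cast1 (blocksEven la a 0) (blocksEven lc c 0) (oCval (Int.toNat ⌊x * N⌋) (Int.toNat ⌊z * N⌋) la a), crossP_cast1 (blocksEven la a 0) (blocksEven lb b 0) (oBval (Int.toNat ⌊x * N⌋) (Int.toNat ⌊z * N⌋) la lc a c),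
      crossP_cast1 (blocksOdd la a 0) (blocksOdd lc c 0) (oCval (Int.toNat ⌊x * N⌋) (Int.toNat ⌊z * N⌋) la a), crossP_cast1 (blocksOdd la a 0) (blocksOdd lb b 0) (oBval (Int.toNat ⌊x * N⌋) (Int.toNat ⌊z * N⌋) la lc a c),
      crossP_cast1 (blocksEven 1 (seq2 (evenSum la a) (oddSum la a)) 0) (blocksEven 1 (seq2 (evenSum lc c) (oddSum lc c)) 0) (oCval (Int.toNat ⌊x * N⌋) (Int.toNat ⌊z * N⌋) la a), crossP_cast1 (blocksEven 1 (seq2 (evenSum la a) (oddSum la a)) 0) (blocksEven 1 (seq2 (evenSum lb b) (oddSum lb b)) 0) (oBval (Int.toNat ⌊x * N⌋) (Int.toNat ⌊z * N⌋) la lc a c),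
      crossP_cast1 (blocksOdd 1 (seq2 (evenSum la a) (oddSum la a)) 0) (blocksOdd 1 (seq2 (evenSum lc c) (oddSum lc c)) 0) (oCval (Int.toNat ⌊x * N⌋) (Int.toNat ⌊z * N⌋) la a), crossP_cast1 (blocksOdd 1 (seq2 (evenSum la a) (oddSum la a)) 0) (blocksOdd 1 (seq2 (evenSum lb b) (oddSum lb b)) 0) (oBval (Int.toNat ⌊x * N⌋) (Int.toNat ⌊z * N⌋) la lc a c)]
    exact ratio_identity (hyperfac_cast_ne _) (hyperfac_cast_ne _)
      (hyperfac_cast_ne _) (hyperfac_cast_ne _) (hyperfac_cast_ne _)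
      (hyperfac_cast_ne _) (hyperfac_cast_ne _) (hyperfac_cast_ne _)
      hd1 hd3 hd5 hd2 hd4 hd6
  -- limits of the distances
  have hXt : Tendsto (fun N : ℕ => Int.toNat ⌊x * N⌋) atTop atTop := by
    have h1 : Tendsto (fun N : ℕ => x * N) atTop atTop :=
      Tendsto.const_mul_atTop hx tendsto_natCast_atTop_atTop
    have h2 : Tendsto (fun N : ℕ => ⌊x * N⌋) atTop atTop :=
      tendsto_floor_atTop.comp h1
    have h3 : Tendsto Int.toNat atTop atTop :=
      tendsto_atTop_atTop.2 fun bd => ⟨(bd : ℤ), fun u hu => by omega⟩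
    exact h3.comp h2
  have hSt : Tendsto (fun N : ℕ => Int.toNat ⌊x * N⌋ + Int.toNat ⌊z * N⌋) atTop atTop :=
    tendsto_atTop_mono (fun N => Nat.le_add_right _ _) hXt
  have hdiv2 : Tendsto (fun s : ℕ => s / 2) atTop atTop :=
    tendsto_atTop_atTop.2 fun bd => ⟨2 * bd + 2, fun s hs => by omega⟩
  have hhalf : Tendsto (fun N : ℕ =>
      ((((Int.toNat ⌊x * N⌋) + (Int.toNat ⌊z * N⌋)) / 2 : ℕ) : ℤ)) atTop atTop :=
    tendsto_natCast_atTop_atTop.comp (hdiv2.comp hSt)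
  have hXZ : Tendsto (fun N : ℕ => (((Int.toNat ⌊x * N⌋) : ℕ) : ℤ)) atTop atTop :=
    tendsto_natCast_atTop_atTop.comp hXt
  have hdC : Tendsto (fun N : ℕ => (oCval (Int.toNat ⌊x * N⌋) (Int.toNat ⌊z * N⌋) la a)) atTop atTop := by
    apply tendsto_atTop_mono _ hhalf
    intro N
    unfold oCval
    omega
  have hdB : Tendsto (fun N : ℕ => (oBval (Int.toNat ⌊x * N⌋) (Int.toNat ⌊z * N⌋) la lc a c)) atTop atTop := by
    apply tendsto_atTop_mono _ hXZ
    intro N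
    unfold oBval
    omega
  have hdBC : Tendsto (fun N : ℕ => (oBval (Int.toNat ⌊x * N⌋) (Int.toNat ⌊z * N⌋) la lc a c) - (oCval (Int.toNat ⌊x * N⌋) (Int.toNat ⌊z * N⌋) la a)) atTop atTop := by
    apply tendsto_atTop_mono _ hhalf
    intro N
    unfold oCval oBval
    have : ((Int.toNat ⌊x * N⌋) + (Int.toNat ⌊z * N⌋)) / 2 ≤ (Int.toNat ⌊x * N⌋) + (Int.toNat ⌊z * N⌋) := Nat.div_le_self _ _
    push_cast
    omega
  -- card balances
  have hk12 : (blocksEven la a 0).card * (blocksEven lc c 0).card + (blocksOdd la a 0).card * (blocksOdd lc c 0).card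
      = (blocksEven 1 (seq2 (evenSum la a) (oddSum la a)) 0).card * (blocksEven 1 (seq2 (evenSum lc c) (oddSum lc c)) 0).card + (blocksOdd 1 (seq2 (evenSum la a) (oddSum la a)) 0).card * (blocksOdd 1 (seq2 (evenSum lc c) (oddSum lc c)) 0).card := by
    simp only [blocksEven_card, blocksOdd_card, evenSum_one, oddSum_one, seq2_one, seq2_two]
    ring
  have hk13 : (blocksEven la a 0).card * (blocksEven lb b 0).card + (blocksOdd la a 0).card * (blocksOdd lb b 0).card
      = (blocksEven 1 (seq2 (evenSum la a) (oddSum la a)) 0).card * (blocksEven 1 (seq2 (evenSum lb b) (oddSum lb b)) 0).card + (blocksOdd 1 (seq2 (evenSum la a) (oddSum la a)) 0).card * (blocksOdd 1 (seq2 (evenSum lb b) (oddSum lb b)) 0).card := by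
    simp only [blocksEven_card, blocksOdd_card, evenSum_one, oddSum_one, seq2_one, seq2_two]
    ring
  have hk23 : (blocksEven lc c 0).card * (blocksEven lb b 0).card + (blocksOdd lc c 0).card * (blocksOdd lb b 0).card
      = (blocksEven 1 (seq2 (evenSum lc c) (oddSum lc c)) 0).card * (blocksEven 1 (seq2 (evenSum lb b) (oddSum lb b)) 0).card + (blocksOdd 1 (seq2 (evenSum lc c) (oddSum lc c)) 0).card * (blocksOdd 1 (seq2 (evenSum lb b) (oddSum lb b)) 0).card := by
    simp only [blocksEven_card, blocksOdd_card, evenSum_one, oddSum_one, seq2_one, seq2_two]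
    ring
  have h12 := (classF_tendsto (blocksEven la a 0) (blocksEven lc c 0) (blocksOdd la a 0) (blocksOdd lc c 0) (blocksEven 1 (seq2 (evenSum la a) (oddSum la a)) 0) (blocksEven 1 (seq2 (evenSum lc c) (oddSum lc c)) 0) (blocksOdd 1 (seq2 (evenSum la a) (oddSum la a)) 0) (blocksOdd 1 (seq2 (evenSum lc c) (oddSum lc c)) 0) hk12).comp hdC
  have h13 := (classF_tendsto (blocksEven la a 0) (blocksEven lb b 0) (blocksOdd la a 0) (blocksOdd lb b 0) (blocksEven 1 (seq2 (evenSum la a) (oddSum la a)) 0) (blocksEven 1 (seq2 (evenSum lb b) (oddSum lb b)) 0) (blocksOdd 1 (seq2 (evenSum la a) (oddSum la a)) 0) (blocksOdd 1 (seq2 (evenSum lb b) (oddSum lb b)) 0) hk13).comp hdB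
  have h23 := (classF_tendsto (blocksEven lc c 0) (blocksEven lb b 0) (blocksOdd lc c 0) (blocksOdd lb b 0) (blocksEven 1 (seq2 (evenSum lc c) (oddSum lc c)) 0) (blocksEven 1 (seq2 (evenSum lb b) (oddSum lb b)) 0) (blocksOdd 1 (seq2 (evenSum lc c) (oddSum lc c)) 0) (blocksOdd 1 (seq2 (evenSum lb b) (oddSum lb b)) 0) hk23).comp hdBC
  apply Tendsto.congr (fun N => (key N).symm)
  have hnn : (𝓝 (((Tcount (blocksOdd la a 0) *
      Tcount (blocksOdd la (fun i => a (i + 1)) 0) *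
      Tcount (blocksOdd lb b 0) *
      Tcount (blocksOdd lb (fun i => b (i + 1)) 0) *
      Tcount (blocksOdd lc c 0) *
      Tcount (blocksOdd lc (fun i => c (i + 1)) 0) : ℚ) : ℝ)))
      = 𝓝 (((Tcount (blocksOdd la a 0) *
      Tcount (blocksOdd la (fun i => a (i + 1)) 0) *
      Tcount (blocksOdd lb b 0) *
      Tcount (blocksOdd lb (fun i => b (i + 1)) 0) *
      Tcount (blocksOdd lc c 0) *
      Tcount (blocksOdd lc (fun i => c (i + 1)) 0) : ℚ) : ℝ) * (1 * (1 * 1))) := by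
    norm_num
  rw [hnn]
  exact tendsto_const_nhds.mul (h12.mul (h13.mul h23))
end
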